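/- Let the underlying graph be a path on agents 1,…,n (edges {i,i+1} for 1 ≤ i < n). For each agent i and any two distinct objects w and y, there is at most one edge {j,j+1} of the path with the following property: there exists a sequence of swaps from σ_0 in which w and y are swapped with each other over edge {j,j+1} and after which agent i holds w. In other words, for every sequence of swaps after which agent i holds w and in which w and y are swapped, the swap of w and y occurs over the same, uniquely determined edge. -/

import Mathlib

/-- The setting of the swap-dynamics model with `N` agents `0, 1, ..., N-1` and
`N` objects, object `j` being the object initially held by agent `j`.
Each agent has a preference list (a duplicate-free list of objects, most preferred
first), and the agents form a social network given by a simple graph. -/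
structure SwapModel (N : ℕ) where
  /-- the preference list of each agent -/
  pref : Fin N → List (Fin N)
  nodup : ∀ i, (pref i).Nodup
  /-- the underlying social network -/
  G : SimpleGraph (Fin N)

namespace SwapModel

variable {N : ℕ}

/-- Agent `i` prefers object `u` to object `v`: both appear on her preference list
and `u` appears (strictly) earlier. -/
def Prefers (M : SwapModel N) (i u v : Fin N) : Prop :=
  ∃ k l : ℕ, k < l ∧ (M.pref i)[k]? = some u ∧ (M.pref i)[l]? = some v

/-- An assignment: a bijection mapping every agent to an object on her list. -/
def IsAssignment (M : SwapModel N) (σ : Fin N → Fin N) : Prop :=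
  Function.Bijective σ ∧ ∀ i, σ i ∈ M.pref i

/-- `(σ 0, σ 1, …, σ t)` is a sequence of swaps: each next assignment arises from
the previous one by performing a swap between two adjacent agents, each of whom
prefers the object of the other agent. -/
def IsSwapSeq (M : SwapModel N) (t : ℕ) (σ : ℕ → Fin N → Fin N) : Prop :=
  M.IsAssignment (σ 0) ∧
    ∀ k, k < t → ∃ i j : Fin N, M.G.Adj i j ∧
      M.Prefers i (σ k j) (σ k i) ∧ M.Prefers j (σ k i) (σ k j) ∧
      σ (k + 1) = σ k ∘ Equiv.swap i j

end SwapModel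

/-- A swap: agent `a1` gives object `o1` to agent `a2` and receives object `o2`;
this records the swap `τ = {{a1, o1}, {a2, o2}}`. -/
structure Swap (N : ℕ) where
  a1 : Fin N
  o1 : Fin N
  a2 : Fin N
  o2 : Fin N

namespace SwapModel

variable {N : ℕ}

/-- The assignment `σ` admits the swap `τ`. -/
def Admitted (M : SwapModel N) (σ : Fin N → Fin N) (τ : Swap N) : Prop :=
  σ τ.a1 = τ.o1 ∧ σ τ.a2 = τ.o2 ∧ M.G.Adj τ.a1 τ.a2 ∧
    M.Prefers τ.a1 τ.o2 τ.o1 ∧ M.Prefers τ.a2 τ.o1 τ.o2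

/-- The assignment obtained from `σ` by performing the swap `τ`. -/
def applySwap (σ : Fin N → Fin N) (τ : Swap N) : Fin N → Fin N :=
  σ ∘ Equiv.swap τ.a1 τ.a2

/-- The assignment obtained from `σ` by performing a sequence of swaps. -/
def applySeq (σ : Fin N → Fin N) : List (Swap N) → (Fin N → Fin N)
  | [] => σ
  | τ :: φ => applySeq (applySwap σ τ) φ

/-- `φ` is a valid swap sequence for the start assignment `σ`. -/
def ValidSeq (M : SwapModel N) (σ : Fin N → Fin N) : List (Swap N) → Prop
  | [] => True
  | τ :: φ => M.Admitted σ τ ∧ M.ValidSeq (applySwap σ τ) φ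

/-- Object `x` is reachable for agent `I` from the initial assignment `σ0`. -/
def Reachable (M : SwapModel N) (σ0 : Fin N → Fin N) (I x : Fin N) : Prop :=
  ∃ φ : List (Swap N), M.ValidSeq σ0 φ ∧ applySeq σ0 φ I = x

end SwapModel

/-- The path graph on `N` agents: agents `i` and `i+1` are adjacent. -/
def pathGraph' (N : ℕ) : SimpleGraph (Fin N) where
  Adj i j := i.val + 1 = j.val ∨ j.val + 1 = i.val
  symm := by constructor; intro i j h; exact h.symm
  loopless := by constructor; intro i h; rcases h with h | h <;> omega

/-- Swap `τ` exchanges the objects `u` and `v`. -/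
def Swap.exchanges {N : ℕ} (τ : Swap N) (u v : Fin N) : Prop :=
  (τ.o1 = u ∧ τ.o2 = v) ∨ (τ.o1 = v ∧ τ.o2 = u)

/-- Swap `τ` takes place over the edge `{j, j+1}` of the path
(agents here being indexed by their `Fin` value). -/
def Swap.onEdge {N : ℕ} (τ : Swap N) (j : ℕ) : Prop :=
  (τ.a1.val = j ∧ τ.a2.val = j + 1) ∨ (τ.a2.val = j ∧ τ.a1.val = j + 1)

section WalkLemmas

variable (f : ℕ → ℕ)

def StepProp : Prop := ∀ k, f (k+1) = f k ∨ f (k+1) = f k + 1 ∨ f k = f (k+1) + 1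
def IntProp : Prop := ∀ s u t, f s = f t → s ≤ u → u ≤ t → f u = f s

theorem ivt_up (hs : StepProp f) : ∀ (n a m : ℕ), f a ≤ m → m ≤ f (a + n) →
    ∃ t, a ≤ t ∧ t ≤ a + n ∧ f t = m := by
  intro n
  induction n with
  | zero => intro a m h1 h2; simp only [Nat.add_zero] at h2; exact ⟨a, le_refl _, le_refl _, by omega⟩
  | succ n ih =>
    intro a m h1 h2
    by_cases h : f a = m
    · exact ⟨a, le_refl _, by omega, h⟩
    · have hlt : f a < m := by omega
      have hstep := hs a
      have h1' : f (a+1) ≤ m := by omega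
      have h2' : m ≤ f ((a+1) + n) := by
        have : (a+1) + n = a + (n+1) := by omega
        rw [this]; exact h2
      obtain ⟨t, ht1, ht2, ht3⟩ := ih (a+1) m h1' h2'
      exact ⟨t, by omega, by omega, ht3⟩

theorem ivt_down (hs : StepProp f) : ∀ (n a m : ℕ), m ≤ f a → f (a + n) ≤ m →
    ∃ t, a ≤ t ∧ t ≤ a + n ∧ f t = m := by
  intro n
  induction n with
  | zero => intro a m h1 h2; simp only [Nat.add_zero] at h2; exact ⟨a, le_refl _, le_refl _, by omega⟩
  | succ n ih =>
    intro a m h1 h2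
    by_cases h : f a = m
    · exact ⟨a, le_refl _, by omega, h⟩
    · have hstep := hs a
      have h1' : m ≤ f (a+1) := by omega
      have h2' : f ((a+1) + n) ≤ m := by
        have : (a+1) + n = a + (n+1) := by omega
        rw [this]; exact h2
      obtain ⟨t, ht1, ht2, ht3⟩ := ih (a+1) m h1' h2'
      exact ⟨t, by omega, by omega, ht3⟩

theorem ivt_up' (hs : StepProp f) (a b m : ℕ) (hab : a ≤ b) (h1 : f a ≤ m) (h2 : m ≤ f b) :
    ∃ t, a ≤ t ∧ t ≤ b ∧ f t = m := by
  have : b = a + (b - a) := by omega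
  rw [this] at h2 ⊢
  exact ivt_up f hs (b - a) a m h1 h2

theorem ivt_down' (hs : StepProp f) (a b m : ℕ) (hab : a ≤ b) (h1 : m ≤ f a) (h2 : f b ≤ m) :
    ∃ t, a ≤ t ∧ t ≤ b ∧ f t = m := by
  have : b = a + (b - a) := by omega
  rw [this] at h2 ⊢
  exact ivt_down f hs (b - a) a m h1 h2

theorem no_up_down (hs : StepProp f) (hi : IntProp f) {u v : ℕ}
    (hu : f (u+1) = f u + 1) (hv : f v = f (v+1) + 1) (huv : u < v) : False := by
  rcases le_or_gt (f v) (f u) with h | h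
  · obtain ⟨t, ht1, ht2, ht3⟩ := ivt_down' f hs (u+1) (v+1) (f u) (by omega) (by omega) (by omega)
    have := hi u (u+1) t ht3.symm (by omega) ht1
    omega
  · obtain ⟨t, ht1, ht2, ht3⟩ := ivt_up' f hs u v (f (v+1)) (by omega) (by omega) (by omega)
    have := hi t v (v+1) (by omega) ht2 (by omega)
    omega

theorem no_down_up (hs : StepProp f) (hi : IntProp f) {u v : ℕ}
    (hu : f u = f (u+1) + 1) (hv : f (v+1) = f v + 1) (huv : u < v) : False := by
  rcases le_or_gt (f u) (f v) with h | h
  · obtain ⟨t, ht1, ht2, ht3⟩ := ivt_up' f hs (u+1) (v+1) (f u) (by omega) (by omega) (by omega)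
    have := hi u (u+1) t ht3.symm (by omega) ht1
    omega
  · obtain ⟨t, ht1, ht2, ht3⟩ := ivt_down' f hs u v (f (v+1)) (by omega) (by omega) (by omega)
    have := hi t v (v+1) (by omega) ht2 (by omega)
    omega

theorem mono_of_up (hs : StepProp f) (hi : IntProp f) {c : ℕ}
    (hc : f (c+1) = f c + 1) : Monotone f := by
  apply monotone_nat_of_le_succ
  intro k
  rcases hs k with h | h | h
  · omega
  · omega
  · exfalso
    rcases lt_trichotomy c k with hck | hck | hck
    · exact no_up_down f hs hi hc h hck
    · subst hck; omega
    · exact no_down_up f hs hi h hc hck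

theorem anti_of_down (hs : StepProp f) (hi : IntProp f) {c : ℕ}
    (hc : f c = f (c+1) + 1) : Antitone f := by
  apply antitone_nat_of_succ_le
  intro k
  rcases hs k with h | h | h
  · omega
  · exfalso
    rcases lt_trichotomy c k with hck | hck | hck
    · exact no_down_up f hs hi hc h hck
    · subst hck; omega
    · exact no_up_down f hs hi h hc hck
  · omega

end WalkLemmas
namespace SwapModel

variable {N : ℕ}

theorem prefers_asymm (M : SwapModel N) {i u v : Fin N}
    (h1 : M.Prefers i u v) (h2 : M.Prefers i v u) : False := by
  obtain ⟨k, l, hkl, hk, hl⟩ := h1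
  obtain ⟨k', l', hkl', hk', hl'⟩ := h2
  have hklen : k < (M.pref i).length := (List.getElem?_eq_some_iff.mp hk).1
  have hllen : l < (M.pref i).length := (List.getElem?_eq_some_iff.mp hl).1
  have e1 : l = k' := (List.getElem?_inj hllen (M.nodup i)).mp (hl.trans hk'.symm)
  have e2 : k = l' := (List.getElem?_inj hklen (M.nodup i)).mp (hk.trans hl'.symm)
  omega

theorem prefers_trans (M : SwapModel N) {i u v z : Fin N}
    (h1 : M.Prefers i u v) (h2 : M.Prefers i v z) : M.Prefers i u z := by
  obtain ⟨k, l, hkl, hk, hl⟩ := h1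
  obtain ⟨k', l', hkl', hk', hl'⟩ := h2
  have hllen : l < (M.pref i).length := (List.getElem?_eq_some_iff.mp hl).1
  have e1 : l = k' := (List.getElem?_inj hllen (M.nodup i)).mp (hl.trans hk'.symm)
  exact ⟨k, l', by omega, hk, hl'⟩

theorem applySeq_append (σ : Fin N → Fin N) (l1 l2 : List (Swap N)) :
    applySeq σ (l1 ++ l2) = applySeq (applySeq σ l1) l2 := by
  induction l1 generalizing σ with
  | nil => rfl
  | cons τ l ih => simp only [List.cons_append, applySeq]; exact ih _

theorem bijective_applySwap {σ : Fin N → Fin N} (h : Function.Bijective σ)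
    (τ : Swap N) : Function.Bijective (applySwap σ τ) :=
  h.comp (Equiv.swap τ.a1 τ.a2).bijective

theorem bijective_applySeq {σ : Fin N → Fin N} (h : Function.Bijective σ)
    (φ : List (Swap N)) : Function.Bijective (applySeq σ φ) := by
  induction φ generalizing σ with
  | nil => exact h
  | cons τ l ih => exact ih (bijective_applySwap h τ)

theorem validSeq_take_get (M : SwapModel N) {σ : Fin N → Fin N} {φ : List (Swap N)}
    (h : M.ValidSeq σ φ) : ∀ (k : ℕ) (hk : k < φ.length),
      M.Admitted (applySeq σ (φ.take k)) φ[k] := by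
  induction φ generalizing σ with
  | nil => intro k hk; simp at hk
  | cons τ l ih =>
    intro k hk
    cases k with
    | zero => exact h.1
    | succ k =>
      simp only [List.take_succ_cons, applySeq, List.getElem_cons_succ]
      exact ih h.2 k (by simpa using hk)

theorem applySeq_take_succ (σ : Fin N → Fin N) (φ : List (Swap N)) (k : ℕ)
    (hk : k < φ.length) :
    applySeq σ (φ.take (k+1)) = applySwap (applySeq σ (φ.take k)) φ[k] := by
  rw [List.take_succ, List.getElem?_eq_getElem hk]
  rw [Option.toList_some, applySeq_append]
  rfl

theorem applySeq_take_stable (σ : Fin N → Fin N) (φ : List (Swap N)) (k : ℕ)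
    (hk : φ.length ≤ k) :
    applySeq σ (φ.take (k+1)) = applySeq σ (φ.take k) := by
  rw [List.take_of_length_le hk, List.take_of_length_le (by omega)]

theorem improve_step (M : SwapModel N) {σ : Fin N → Fin N} {τ : Swap N}
    (h : M.Admitted σ τ) (a : Fin N) :
    applySwap σ τ a = σ a ∨ M.Prefers a (applySwap σ τ a) (σ a) := by
  obtain ⟨ha1, ha2, hadj, hp1, hp2⟩ := h
  have hne : τ.a1 ≠ τ.a2 := hadj.ne
  by_cases h1 : a = τ.a1
  · subst h1
    right
    have : applySwap σ τ τ.a1 = σ τ.a2 := by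
      simp [applySwap, Equiv.swap_apply_left]
    rw [this, ha1, ha2]
    exact hp1
  · by_cases h2 : a = τ.a2
    · subst h2
      right
      have : applySwap σ τ τ.a2 = σ τ.a1 := by
        simp [applySwap, Equiv.swap_apply_right]
      rw [this, ha1, ha2]
      exact hp2
    · left
      simp [applySwap, Equiv.swap_apply_of_ne_of_ne h1 h2]

/-- The object held by an agent only improves along a valid sequence. -/
theorem improve (M : SwapModel N) {σ0 : Fin N → Fin N} {φ : List (Swap N)}
    (hv : M.ValidSeq σ0 φ) (a : Fin N) :
    ∀ s t, s ≤ t → applySeq σ0 (φ.take t) a = applySeq σ0 (φ.take s) a ∨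
      M.Prefers a (applySeq σ0 (φ.take t) a) (applySeq σ0 (φ.take s) a) := by
  intro s t hst
  induction t, hst using Nat.le_induction with
  | base => exact Or.inl rfl
  | succ t hst ih =>
    have step : applySeq σ0 (φ.take (t+1)) a = applySeq σ0 (φ.take t) a ∨
        M.Prefers a (applySeq σ0 (φ.take (t+1)) a) (applySeq σ0 (φ.take t) a) := by
      by_cases ht : t < φ.length
      · rw [applySeq_take_succ σ0 φ t ht]
        exact M.improve_step (M.validSeq_take_get hv t ht) a
      · rw [applySeq_take_stable σ0 φ t (by omega)]; exact Or.inl rfl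
    rcases step with h | h
    · rw [h]; exact ih
    · rcases ih with h' | h'
      · rw [h'] at h; exact Or.inr h
      · exact Or.inr (M.prefers_trans h h')


/-- An agent holds a given object during a contiguous interval of time. -/
theorem hold_interval (M : SwapModel N) {σ0 : Fin N → Fin N} {φ : List (Swap N)}
    (hv : M.ValidSeq σ0 φ) (a : Fin N) {s u t : ℕ} (hsu : s ≤ u) (hut : u ≤ t)
    (heq : applySeq σ0 (φ.take t) a = applySeq σ0 (φ.take s) a) :
    applySeq σ0 (φ.take u) a = applySeq σ0 (φ.take s) a := by
  rcases M.improve hv a s u hsu with h1 | h1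
  · exact h1
  · exfalso
    rcases M.improve hv a u t hut with h2 | h2
    · rw [heq] at h2; rw [h2] at h1; exact M.prefers_asymm h1 h1
    · rw [heq] at h2; exact M.prefers_asymm h1 h2

end SwapModel

section Pos

variable {n : ℕ}

/-- The agent holding object `x` under assignment `σ`. -/
noncomputable def posOf (σ : Fin (n+1) → Fin (n+1)) (x : Fin (n+1)) : Fin (n+1) :=
  Function.invFun σ x

theorem posOf_spec {σ : Fin (n+1) → Fin (n+1)} (h : Function.Bijective σ)
    (x : Fin (n+1)) : σ (posOf σ x) = x :=
  Function.rightInverse_invFun h.2 x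

theorem posOf_eq {σ : Fin (n+1) → Fin (n+1)} (h : Function.Bijective σ)
    {a x : Fin (n+1)} (ha : σ a = x) : posOf σ x = a :=
  h.1 (by rw [posOf_spec h, ha])

end Pos
/-- The assignment after the first `k` swaps of `φ`. -/
def seqAt {n : ℕ} (σ0 : Fin n → Fin n) (φ : List (Swap n)) (k : ℕ) : Fin n → Fin n :=
  SwapModel.applySeq σ0 (φ.take k)

/-- The (index of the) agent holding object `x` after the first `k` swaps. -/
noncomputable def posAt {n : ℕ} (σ0 : Fin (n+1) → Fin (n+1)) (φ : List (Swap (n+1)))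
    (x : Fin (n+1)) (k : ℕ) : ℕ :=
  (posOf (seqAt σ0 φ k) x).val

section SeqAt

open SwapModel

variable {n : ℕ} {σ0 : Fin (n+1) → Fin (n+1)} {φ : List (Swap (n+1))}

theorem seqAt_zero : seqAt σ0 φ 0 = σ0 := rfl

theorem seqAt_length : seqAt σ0 φ φ.length = applySeq σ0 φ := by
  unfold seqAt; rw [List.take_length]

theorem seqAt_bij (hbij0 : Function.Bijective σ0) (k : ℕ) :
    Function.Bijective (seqAt σ0 φ k) :=
  bijective_applySeq hbij0 _

theorem posAt_eq (hbij0 : Function.Bijective σ0) {k : ℕ} {a x : Fin (n+1)}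
    (h : seqAt σ0 φ k a = x) : posAt σ0 φ x k = a.val := by
  unfold posAt; rw [posOf_eq (seqAt_bij hbij0 k) h]

theorem seqAt_posAt (hbij0 : Function.Bijective σ0) (k : ℕ) (x : Fin (n+1)) :
    seqAt σ0 φ k (posOf (seqAt σ0 φ k) x) = x :=
  posOf_spec (seqAt_bij hbij0 k) x

theorem posAt_step (M : SwapModel (n+1)) (hG : M.G = pathGraph' (n+1))
    (hbij0 : Function.Bijective σ0) (hv : M.ValidSeq σ0 φ) (x : Fin (n+1)) :
    StepProp (posAt σ0 φ x) := by
  intro k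
  unfold posAt
  by_cases hk : k < φ.length
  · have hadm := M.validSeq_take_get hv k hk
    have hS1 : seqAt σ0 φ (k+1) = applySwap (seqAt σ0 φ k) φ[k] :=
      applySeq_take_succ σ0 φ k hk
    have hadj := hadm.2.2.1
    rw [hG] at hadj
    simp only [pathGraph'] at hadj
    have hpx : seqAt σ0 φ k (posOf (seqAt σ0 φ k) x) = x := seqAt_posAt hbij0 k x
    have hstep : posOf (seqAt σ0 φ (k+1)) x
        = Equiv.swap φ[k].a1 φ[k].a2 (posOf (seqAt σ0 φ k) x) := by
      apply posOf_eq (seqAt_bij hbij0 (k+1))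
      rw [hS1]
      show seqAt σ0 φ k (Equiv.swap φ[k].a1 φ[k].a2
        (Equiv.swap φ[k].a1 φ[k].a2 (posOf (seqAt σ0 φ k) x))) = x
      rw [Equiv.swap_apply_self]; exact hpx
    rw [hstep]
    by_cases h1 : posOf (seqAt σ0 φ k) x = φ[k].a1
    · rw [h1, Equiv.swap_apply_left]; omega
    · by_cases h2 : posOf (seqAt σ0 φ k) x = φ[k].a2
      · rw [h2, Equiv.swap_apply_right]; omega
      · rw [Equiv.swap_apply_of_ne_of_ne h1 h2]; left; rfl
  · have : seqAt σ0 φ (k+1) = seqAt σ0 φ k := applySeq_take_stable σ0 φ k (by omega)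
    rw [this]; left; rfl

theorem posAt_int (M : SwapModel (n+1)) (hbij0 : Function.Bijective σ0)
    (hv : M.ValidSeq σ0 φ) (x : Fin (n+1)) :
    IntProp (posAt σ0 φ x) := by
  intro s u t hst hsu hut
  unfold posAt at hst ⊢
  have hfin : posOf (seqAt σ0 φ s) x = posOf (seqAt σ0 φ t) x := Fin.ext hst
  have h1 : seqAt σ0 φ s (posOf (seqAt σ0 φ s) x) = x := seqAt_posAt hbij0 s x
  have h2 : seqAt σ0 φ t (posOf (seqAt σ0 φ s) x) = x := by
    rw [hfin]; exact seqAt_posAt hbij0 t x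
  have heq : seqAt σ0 φ t (posOf (seqAt σ0 φ s) x) = seqAt σ0 φ s (posOf (seqAt σ0 φ s) x) := by
    rw [h1, h2]
  have h3 : seqAt σ0 φ u (posOf (seqAt σ0 φ s) x) = seqAt σ0 φ s (posOf (seqAt σ0 φ s) x) :=
    M.hold_interval hv _ hsu hut heq
  have : posOf (seqAt σ0 φ u) x = posOf (seqAt σ0 φ s) x :=
    posOf_eq (seqAt_bij hbij0 u) (h3.trans h1)
  rw [this]

theorem improve' (M : SwapModel (n+1)) (hv : M.ValidSeq σ0 φ) (a : Fin (n+1))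
    {s t : ℕ} (hst : s ≤ t) :
    seqAt σ0 φ t a = seqAt σ0 φ s a ∨ M.Prefers a (seqAt σ0 φ t a) (seqAt σ0 φ s a) :=
  M.improve hv a s t hst

theorem admitted_seqAt (M : SwapModel (n+1)) (hv : M.ValidSeq σ0 φ) {k : ℕ}
    (hk : k < φ.length) : M.Admitted (seqAt σ0 φ k) φ[k] :=
  M.validSeq_take_get hv k hk

theorem seqAt_succ {k : ℕ} (hk : k < φ.length) :
    seqAt σ0 φ (k+1) = applySwap (seqAt σ0 φ k) φ[k] :=
  SwapModel.applySeq_take_succ σ0 φ k hk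

end SeqAt
/-- The exported facts about a swap sequence in which `w` and `y` are exchanged
over edge `{j, j+1}` and agent `i` ends up with `w`. -/
def OutProp {N : ℕ} (M : SwapModel (N+1)) (w y p0 q0 i : Fin (N+1)) (j : ℕ) : Prop :=
  (p0.val ≤ j ∧ j+1 ≤ i.val ∧ j+1 ≤ q0.val ∧
    (∃ A : Fin (N+1), A.val = j ∧ M.Prefers A y w) ∧
    (∀ m : ℕ, j < m → m ≤ i.val → m ≤ q0.val →
      ∃ A : Fin (N+1), A.val = m ∧ M.Prefers A w y)) ∨
  (j+1 ≤ p0.val ∧ i.val ≤ j ∧ q0.val ≤ j ∧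
    (∃ A : Fin (N+1), A.val = j+1 ∧ M.Prefers A y w) ∧
    (∀ m : ℕ, m ≤ j → i.val ≤ m → q0.val ≤ m →
      ∃ A : Fin (N+1), A.val = m ∧ M.Prefers A w y))

open SwapModel in
theorem extract {N : ℕ} (M : SwapModel (N+1)) (hG : M.G = pathGraph' (N+1))
    {σ0 : Fin (N+1) → Fin (N+1)} (hbij0 : Function.Bijective σ0)
    {w y : Fin (N+1)} (hwy : w ≠ y)
    {p0 q0 : Fin (N+1)} (hp0 : σ0 p0 = w) (hq0 : σ0 q0 = y)
    {i : Fin (N+1)} {j : ℕ} {φ : List (Swap (N+1))}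
    (hv : M.ValidSeq σ0 φ)
    (hτ : ∃ τ ∈ φ, τ.exchanges w y ∧ τ.onEdge j)
    (hend : applySeq σ0 φ i = w) :
    OutProp M w y p0 q0 i j := by
  obtain ⟨τ, hmem, hex, hedge⟩ := hτ
  obtain ⟨c, hc, hgetc⟩ := List.getElem_of_mem hmem
  -- the two assignments around the crossing
  have hadm := admitted_seqAt M hv hc
  rw [hgetc] at hadm
  obtain ⟨ha1, ha2, hadj, hp1, hp2⟩ := hadm
  have hS1 : seqAt σ0 φ (c+1) = applySwap (seqAt σ0 φ c) τ := by
    rw [seqAt_succ hc, hgetc]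
  have e1 : seqAt σ0 φ (c+1) τ.a1 = seqAt σ0 φ c τ.a2 := by
    rw [hS1]
    show seqAt σ0 φ c (Equiv.swap τ.a1 τ.a2 τ.a1) = seqAt σ0 φ c τ.a2
    rw [Equiv.swap_apply_left]
  have e2 : seqAt σ0 φ (c+1) τ.a2 = seqAt σ0 φ c τ.a1 := by
    rw [hS1]
    show seqAt σ0 φ c (Equiv.swap τ.a1 τ.a2 τ.a2) = seqAt σ0 φ c τ.a1
    rw [Equiv.swap_apply_right]
  -- the two possible configurations at the crossing
  have hconfig :
      (∃ A B : Fin (N+1), A.val = j ∧ B.val = j+1 ∧ seqAt σ0 φ c A = w ∧ seqAt σ0 φ c B = y ∧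
        seqAt σ0 φ (c+1) A = y ∧ seqAt σ0 φ (c+1) B = w ∧ M.Prefers A y w) ∨
      (∃ A B : Fin (N+1), A.val = j ∧ B.val = j+1 ∧ seqAt σ0 φ c A = y ∧ seqAt σ0 φ c B = w ∧
        seqAt σ0 φ (c+1) A = w ∧ seqAt σ0 φ (c+1) B = y ∧ M.Prefers B y w) := by
    rcases hex with ⟨ho1, ho2⟩ | ⟨ho1, ho2⟩ <;> rcases hedge with ⟨he1, he2⟩ | ⟨he1, he2⟩
    · exact Or.inl ⟨τ.a1, τ.a2, he1, he2, by rw [ha1, ho1], by rw [ha2, ho2],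
        by rw [e1, ha2, ho2], by rw [e2, ha1, ho1], by rw [← ho1, ← ho2]; exact hp1⟩
    · exact Or.inr ⟨τ.a2, τ.a1, he1, he2, by rw [ha2, ho2], by rw [ha1, ho1],
        by rw [e2, ha1, ho1], by rw [e1, ha2, ho2], by rw [← ho1, ← ho2]; exact hp1⟩
    · exact Or.inr ⟨τ.a1, τ.a2, he1, he2, by rw [ha1, ho1], by rw [ha2, ho2],
        by rw [e1, ha2, ho2], by rw [e2, ha1, ho1], by rw [← ho1, ← ho2]; exact hp2⟩
    · exact Or.inl ⟨τ.a2, τ.a1, he1, he2, by rw [ha2, ho2], by rw [ha1, ho1],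
        by rw [e2, ha1, ho1], by rw [e1, ha2, ho2], by rw [← ho1, ← ho2]; exact hp2⟩
  -- position functions
  have hstepP : StepProp (posAt σ0 φ w) := posAt_step M hG hbij0 hv w
  have hstepQ : StepProp (posAt σ0 φ y) := posAt_step M hG hbij0 hv y
  have hintP : IntProp (posAt σ0 φ w) := posAt_int M hbij0 hv w
  have hintQ : IntProp (posAt σ0 φ y) := posAt_int M hbij0 hv y
  have hP0 : posAt σ0 φ w 0 = p0.val := posAt_eq hbij0 (by rw [seqAt_zero]; exact hp0)
  have hQ0 : posAt σ0 φ y 0 = q0.val := posAt_eq hbij0 (by rw [seqAt_zero]; exact hq0)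
  have hPT : posAt σ0 φ w φ.length = i.val :=
    posAt_eq hbij0 (by rw [seqAt_length]; exact hend)
  have hcT : c + 1 ≤ φ.length := hc
  -- the common final step: finding an agent that holds `y` and then `w`
  have visit : ∀ (m t1 t2 : ℕ), posAt σ0 φ y t1 = m → posAt σ0 φ w t2 = m → t1 ≤ t2 →
      ∃ A : Fin (N+1), A.val = m ∧ M.Prefers A w y := by
    intro m t1 t2 hQt1 hPt2 ht12
    refine ⟨posOf (seqAt σ0 φ t2) w, hPt2, ?_⟩
    have hfin : posOf (seqAt σ0 φ t1) y = posOf (seqAt σ0 φ t2) w :=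
      Fin.ext (hQt1.trans hPt2.symm)
    have hy : seqAt σ0 φ t1 (posOf (seqAt σ0 φ t2) w) = y := by
      rw [← hfin]; exact seqAt_posAt hbij0 t1 y
    have hw : seqAt σ0 φ t2 (posOf (seqAt σ0 φ t2) w) = w := seqAt_posAt hbij0 t2 w
    rcases improve' M hv (posOf (seqAt σ0 φ t2) w) ht12 with h | h
    · exact absurd (hw.symm.trans (h.trans hy)) hwy
    · rw [hw, hy] at h; exact h
  rcases hconfig with ⟨A, B, hA, hB, h1, h2, h3, h4, hpref⟩ |
      ⟨A, B, hA, hB, h1, h2, h3, h4, hpref⟩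
  · -- rightward configuration
    left
    have pc : posAt σ0 φ w c = j := by rw [posAt_eq hbij0 h1, hA]
    have qc : posAt σ0 φ y c = j + 1 := by rw [posAt_eq hbij0 h2, hB]
    have pc1 : posAt σ0 φ w (c+1) = j + 1 := by rw [posAt_eq hbij0 h4, hB]
    have qc1 : posAt σ0 φ y (c+1) = j := by rw [posAt_eq hbij0 h3, hA]
    have monoP : Monotone (posAt σ0 φ w) := mono_of_up _ hstepP hintP (c := c) (by omega)
    have antiQ : Antitone (posAt σ0 φ y) := anti_of_down _ hstepQ hintQ (c := c) (by omega)
    have f1 : p0.val ≤ j := by rw [← hP0, ← pc]; exact monoP (Nat.zero_le c)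
    have f2 : j + 1 ≤ i.val := by rw [← hPT, ← pc1]; exact monoP hcT
    have f3 : j + 1 ≤ q0.val := by rw [← hQ0, ← qc]; exact antiQ (Nat.zero_le c)
    refine ⟨f1, f2, f3, ⟨A, hA, hpref⟩, ?_⟩
    intro m hm1 hm2 hm3
    obtain ⟨t1, ht10, ht1c, hQt1⟩ :=
      ivt_down' _ hstepQ 0 c m (Nat.zero_le c) (by omega) (by omega)
    obtain ⟨t2, ht2c, ht2T, hPt2⟩ :=
      ivt_up' _ hstepP c φ.length m (by omega) (by omega) (by omega)
    exact visit m t1 t2 hQt1 hPt2 (by omega)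
  · -- leftward configuration
    right
    have pc : posAt σ0 φ w c = j + 1 := by rw [posAt_eq hbij0 h2, hB]
    have qc : posAt σ0 φ y c = j := by rw [posAt_eq hbij0 h1, hA]
    have pc1 : posAt σ0 φ w (c+1) = j := by rw [posAt_eq hbij0 h3, hA]
    have qc1 : posAt σ0 φ y (c+1) = j + 1 := by rw [posAt_eq hbij0 h4, hB]
    have antiP : Antitone (posAt σ0 φ w) := anti_of_down _ hstepP hintP (c := c) (by omega)
    have monoQ : Monotone (posAt σ0 φ y) := mono_of_up _ hstepQ hintQ (c := c) (by omega)
    have f1 : j + 1 ≤ p0.val := by rw [← hP0, ← pc]; exact antiP (Nat.zero_le c)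
    have f2 : i.val ≤ j := by rw [← hPT, ← pc1]; exact antiP hcT
    have f3 : q0.val ≤ j := by rw [← hQ0, ← qc]; exact monoQ (Nat.zero_le c)
    refine ⟨f1, f2, f3, ⟨B, hB, hpref⟩, ?_⟩
    intro m hm1 hm2 hm3
    obtain ⟨t1, ht10, ht1c, hQt1⟩ :=
      ivt_up' _ hstepQ 0 c m (Nat.zero_le c) (by omega) (by omega)
    obtain ⟨t2, ht2c, ht2T, hPt2⟩ :=
      ivt_down' _ hstepP c φ.length m (by omega) (by omega) (by omega)
    exact visit m t1 t2 hQt1 hPt2 (by omega)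

theorem combine_lt {N : ℕ} (M : SwapModel (N+1)) {w y p0 q0 i : Fin (N+1)}
    {a b : ℕ} (hab : a < b)
    (O : OutProp M w y p0 q0 i a) (O' : OutProp M w y p0 q0 i b) : False := by
  rcases O with ⟨f1, f2, f3, ⟨A, hA, hApref⟩, hAll⟩ | ⟨f1, f2, f3, ⟨A, hA, hApref⟩, hAll⟩ <;>
    rcases O' with ⟨g1, g2, g3, ⟨A', hA', hA'pref⟩, hAll'⟩ |
      ⟨g1, g2, g3, ⟨A', hA', hA'pref⟩, hAll'⟩
  · -- R, R : use the agent at position b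
    obtain ⟨A'', hA'', hpref''⟩ := hAll b hab (by omega) (by omega)
    have : A'' = A' := Fin.ext (by omega)
    rw [this] at hpref''
    exact M.prefers_asymm hpref'' hA'pref
  · -- R, L : impossible by arithmetic
    omega
  · -- L, R : impossible by arithmetic
    omega
  · -- L, L : use the agent at position a+1
    obtain ⟨A'', hA'', hpref''⟩ := hAll' (a+1) (by omega) (by omega) (by omega)
    have : A'' = A := Fin.ext (by omega)
    rw [this] at hpref''
    exact M.prefers_asymm hpref'' hApref
/-- Lemma 2.  The underlying graph is the path on agents
`0, 1, …, N` (edges `{i, i+1}`), with a fixed initial assignment `σ0`.  For each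
agent `i` and any two distinct objects `w` and `y` there is at most one edge
`{j, j+1}` of the path such that some sequence of swaps starting from `σ0` swaps
`w` and `y` with each other over the edge `{j, j+1}` and ends with agent `i`
holding `w`. -/
theorem statement7 (N : ℕ) (M : SwapModel (N + 1)) (hG : M.G = pathGraph' (N + 1))
    (σ0 : Fin (N + 1) → Fin (N + 1)) (hσ0 : M.IsAssignment σ0)
    (i w y : Fin (N + 1)) (hwy : w ≠ y) (j j' : ℕ)
    (h1 : ∃ φ : List (Swap (N + 1)), M.ValidSeq σ0 φ ∧
      (∃ τ ∈ φ, τ.exchanges w y ∧ τ.onEdge j) ∧ SwapModel.applySeq σ0 φ i = w)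
    (h2 : ∃ φ : List (Swap (N + 1)), M.ValidSeq σ0 φ ∧
      (∃ τ ∈ φ, τ.exchanges w y ∧ τ.onEdge j') ∧ SwapModel.applySeq σ0 φ i = w) :
    j = j' := by
  obtain ⟨hbij0, -⟩ := hσ0
  obtain ⟨p0, hp0⟩ := hbij0.2 w
  obtain ⟨q0, hq0⟩ := hbij0.2 y
  obtain ⟨φ, hv, hτ, hend⟩ := h1
  obtain ⟨φ', hv', hτ', hend'⟩ := h2
  have O := extract M hG hbij0 hwy hp0 hq0 hv hτ hend
  have O' := extract M hG hbij0 hwy hp0 hq0 hv' hτ' hend'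
  rcases lt_trichotomy j j' with h | h | h
  · exact absurd (combine_lt M h O O') (by simp)
  · exact h
  · exact absurd (combine_lt M h O' O) (by simp)
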